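/- Let f : ℝ → ℝ be Lipschitz and F : ℝ × ℝ → ℝ be a Lipschitz, monotone numerical flux consistent with f. Then there exists C > 0 such that for all p, q ∈ ℝ, (f(q) − F(p,q))² ≤ C ∫_p^q (f(s) − F(p,q)) ds. -/

import Mathlib

/-- Key lemma: a nonnegative `L`-Lipschitz function on `[u,v]` whose value at `v`
is at most `L * (v - u)` has integral at least `(ψ v)^2 / (2L)`. -/
lemma key_lipschitz_int (ψ : ℝ → ℝ) (L u v : ℝ) (hL : 0 < L) (huv : u ≤ v)
    (hlip : ∀ x y, |ψ x - ψ y| ≤ L * |x - y|)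
    (hpos : ∀ s ∈ Set.Icc u v, 0 ≤ ψ s)
    (hM : ψ v ≤ L * (v - u)) :
    (ψ v) ^ 2 ≤ 2 * L * ∫ s in u..v, ψ s := by
  set M := ψ v with hMdef
  have hM0 : 0 ≤ M := hpos v ⟨huv, le_refl v⟩
  set c := v - M / L with hcdef
  have hcu : u ≤ c := by
    have : M / L ≤ v - u := (div_le_iff₀ hL).2 (by linarith [hM])
    simp only [hcdef]; linarith
  have hcv : c ≤ v := by
    have : 0 ≤ M / L := div_nonneg hM0 hL.le
    simp only [hcdef]; linarith
  have hcont : Continuous ψ := by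
    have : LipschitzWith (Real.toNNReal L) ψ := by
      apply LipschitzWith.of_dist_le_mul
      intro x y
      simpa [Real.dist_eq, Real.coe_toNNReal L hL.le] using hlip x y
    exact this.continuous
  have hInt : ∀ a b : ℝ, IntervalIntegrable ψ MeasureTheory.volume a b :=
    fun a b => hcont.intervalIntegrable a b
  have hsplit : ∫ s in u..v, ψ s = (∫ s in u..c, ψ s) + ∫ s in c..v, ψ s :=
    (intervalIntegral.integral_add_adjacent_intervals (hInt u c) (hInt c v)).symm
  have h1 : 0 ≤ ∫ s in u..c, ψ s :=
    intervalIntegral.integral_nonneg hcu (fun s hs => hpos s ⟨hs.1, le_trans hs.2 hcv⟩)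
  have hIntLin : IntervalIntegrable (fun s => M - L * (v - s)) MeasureTheory.volume c v :=
    ((continuous_const.sub (continuous_const.mul
      (continuous_const.sub continuous_id))).intervalIntegrable c v)
  have h2 : (∫ s in c..v, (M - L * (v - s))) ≤ ∫ s in c..v, ψ s := by
    apply intervalIntegral.integral_mono_on hcv hIntLin (hInt c v)
    intro s hs
    have h := hlip v s
    rw [abs_of_nonneg (sub_nonneg.2 hs.2)] at h
    have := (abs_le.1 h).1
    have h' := (abs_le.1 h).2
    linarith
  have hcomp : (∫ s in c..v, (M - L * (v - s))) = M ^ 2 / (2 * L) := by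
    have heq : (fun s : ℝ => M - L * (v - s)) = fun s => (M - L * v) + L * s := by
      funext s; ring
    rw [heq]
    rw [intervalIntegral.integral_add (intervalIntegrable_const)
      ((by fun_prop : Continuous fun x : ℝ => L * x).intervalIntegrable c v)]
    rw [intervalIntegral.integral_const, intervalIntegral.integral_const_mul,
      integral_id]
    simp only [smul_eq_mul, hcdef]
    field_simp
    ring
  have hge : M ^ 2 / (2 * L) ≤ ∫ s in u..v, ψ s := by
    rw [hsplit]; rw [hcomp] at h2; linarith
  rw [div_le_iff₀ (by positivity)] at hge
  nlinarith [hge]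

theorem flux_viscosity_sq_bound_right (f : ℝ → ℝ) (F : ℝ → ℝ → ℝ) (Lf LF : ℝ)
    (hLf : 0 ≤ Lf) (hLF : 0 ≤ LF)
    (hflip : ∀ x y, |f x - f y| ≤ Lf * |x - y|)
    (hFlip : ∀ p q p' q', |F p q - F p' q'| ≤ LF * (|p - p'| + |q - q'|))
    (hcons : ∀ v, F v v = f v)
    (hmono₁ : ∀ w, Monotone (fun v => F v w))
    (hmono₂ : ∀ v, Antitone (fun w => F v w)) :
    ∃ C > 0, ∀ p q : ℝ,
      (f q - F p q) ^ 2 ≤ C * ∫ s in p..q, (f s - F p q) := by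
  set L : ℝ := Lf + LF + 1 with hLdef
  have hL : 0 < L := by positivity
  refine ⟨2 * L, by positivity, fun p q => ?_⟩
  rcases le_or_gt p q with hpq | hpq
  · -- p ≤ q, ψ s = f s - F p q
    have := key_lipschitz_int (fun s => f s - F p q) L p q hL hpq
      (fun x y => by
        beta_reduce
        have := hflip x y
        have hx : |x - y| ≥ 0 := abs_nonneg _
        calc |f x - F p q - (f y - F p q)| = |f x - f y| := by ring_nf
          _ ≤ Lf * |x - y| := hflip x y
          _ ≤ L * |x - y| := by nlinarith)
      (fun s hs => by
        beta_reduce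
        have h1 : F s q ≤ F s s := hmono₂ s hs.2
        have h2 : F p q ≤ F s q := hmono₁ q hs.1
        rw [← hcons s]; linarith)
      (by
        beta_reduce
        rw [← hcons q]
        have := hFlip q q p q
        rw [sub_self, abs_zero, add_zero, abs_of_nonneg (by linarith : (0:ℝ) ≤ q - p)] at this
        have h := (abs_le.1 this).2
        nlinarith [sub_nonneg.2 hpq])
    exact this
  · -- q < p : reflect
    have hqp : q ≤ p := hpq.le
    have hrefl : (∫ s in q..p, (F p q - f (q + p - s))) = ∫ s in q..p, (F p q - f s) := by
      have := intervalIntegral.integral_comp_sub_left (a := q) (b := p)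
        (fun t => F p q - f t) (q + p)
      simpa using this
    have hkey := key_lipschitz_int (fun s => F p q - f (q + p - s)) L q p hL hqp
      (fun x y => by
        beta_reduce
        have h := hflip (q + p - x) (q + p - y)
        have habs : |q + p - x - (q + p - y)| = |x - y| := by
          rw [show q + p - x - (q + p - y) = -(x - y) by ring, abs_neg]
        rw [habs] at h
        calc |F p q - f (q + p - x) - (F p q - f (q + p - y))|
            = |f (q + p - y) - f (q + p - x)| := by ring_nf
          _ = |f (q + p - x) - f (q + p - y)| := (abs_sub_comm _ _)
          _ ≤ Lf * |x - y| := h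
          _ ≤ L * |x - y| := by nlinarith [abs_nonneg (x - y)])
      (fun s hs => by
        beta_reduce
        set t := q + p - s with htdef
        have ht1 : q ≤ t := by simp [htdef]; linarith [hs.2]
        have ht2 : t ≤ p := by simp [htdef]; linarith [hs.1]
        have h1 : f t = F t t := (hcons t).symm
        have h2 : F t t ≤ F t q := hmono₂ t ht1
        have h3 : F t q ≤ F p q := hmono₁ q ht2
        linarith)
      (by
        simp only [show q + p - p = q by ring]
        rw [← hcons q]
        have := hFlip p q q q
        rw [sub_self, abs_zero, add_zero,
          abs_of_nonneg (by linarith : (0:ℝ) ≤ p - q)] at this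
        have h := (abs_le.1 this).2
        nlinarith [sub_nonneg.2 hqp])
    simp only [show q + p - p = q by ring] at hkey
    have hflip_int : (∫ s in p..q, (f s - F p q)) = ∫ s in q..p, (F p q - f s) := by
      rw [intervalIntegral.integral_symm]
      rw [← intervalIntegral.integral_neg]
      congr 1; funext s; ring
    rw [hflip_int, ← hrefl]
    nlinarith [hkey]
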